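/- Let Γ be a Euclidean subring of ℂ with quotient field K, and let z ∈ ℂ' = ℂ \ K. Let (a_n) be a continued fraction expansion of z over Γ such that the denominator sequence satisfies |q_{n−1}| ≤ |q_n| for all n ≥ 1, let (z_n) be the iteration sequence and (δ_n) the relative errors. Suppose inf_n |z_n| > 1 and limsup_n |δ_n| < ν(Γ). Then z is badly approximable with respect to Γ if and only if the sequence (a_n) is bounded. -/

import Mathlib

/-- The quotient field of a subring `Γ` of `ℂ`, as a subset of `ℂ`. -/
def quotField (Γ : Subring ℂ) : Set ℂ :=
  {x | ∃ p ∈ Γ, ∃ q ∈ Γ, q ≠ 0 ∧ x = p / q}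

/-- `(a n)` is a continued fraction expansion of `z` over `Γ`, with iteration
sequence `(zs n)`: `zs 0 = z`, `0 < |zs n - a n| < 1` and `zs (n+1) = (zs n - a n)⁻¹`. -/
def IsCFE (Γ : Subring ℂ) (z : ℂ) (a zs : ℕ → ℂ) : Prop :=
  (∀ n, a n ∈ Γ) ∧ zs 0 = z ∧
    (∀ n, 0 < ‖zs n - a n‖ ∧ ‖zs n - a n‖ < 1) ∧
    (∀ n, zs (n + 1) = (zs n - a n)⁻¹)

/-- The Q-pair of a sequence of partial quotients, with indices shifted by one:
`p (n+1)` is the paper's `p_n` and `q (n+1)` is the paper's `q_n`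
(so `p 0 = p_{-1} = 1` and `q 0 = q_{-1} = 0`). -/
def IsQPair (a p q : ℕ → ℂ) : Prop :=
  p 0 = 1 ∧ p 1 = a 0 ∧ (∀ n, p (n + 2) = a (n + 1) * p (n + 1) + p n) ∧
  q 0 = 0 ∧ q 1 = 1 ∧ (∀ n, q (n + 2) = a (n + 1) * q (n + 1) + q n)


/-- The sequence of relative errors `δ_n = q_n (q_n z - p_n)` (index shifted by one
in `p`, `q`, so `relErr z p q n` is the paper's `δ_n`). -/
def relErr (z : ℂ) (p q : ℕ → ℂ) (n : ℕ) : ℂ :=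
  q (n + 1) * (q (n + 1) * z - p (n + 1))

/-- `z ∈ ℂ` is badly approximable with respect to `Γ`. -/
def BadlyApprox (Γ : Subring ℂ) (z : ℂ) : Prop :=
  ∃ δ : ℝ, 0 < δ ∧ ∀ p ∈ Γ, ∀ q ∈ Γ, q ≠ (0 : ℂ) →
    δ / ‖q‖ ^ 2 ≤ ‖z - p / q‖

section Helpers


lemma cabs_sub_cabs (x y : ℂ) : ‖x‖ - ‖y‖ ≤ ‖x - y‖ := by
  exact norm_sub_norm_le x y

lemma cabs_sub_le (x y : ℂ) : ‖x - y‖ ≤ ‖x‖ + ‖y‖ := by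
  exact norm_sub_le x y

lemma gamma_one_le (Γ : Subring ℂ) (hdisc : DiscreteTopology Γ) {γ : ℂ}
    (hγ : γ ∈ Γ) (h0 : γ ≠ 0) : 1 ≤ ‖γ‖ := by
  by_contra h
  push_neg at h
  have hopen : IsOpen ({(⟨0, Γ.zero_mem⟩ : Γ)} : Set Γ) := isOpen_discrete _
  obtain ⟨U, hU, hU0⟩ := isOpen_induced_iff.1 hopen
  have h0U : (0 : ℂ) ∈ U := by
    have : (⟨0, Γ.zero_mem⟩ : Γ) ∈ (Subtype.val ⁻¹' U : Set Γ) := by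
      rw [hU0]; exact rfl
    exact this
  obtain ⟨ε, hε, hball⟩ := Metric.isOpen_iff.1 hU 0 h0U
  obtain ⟨n, hn⟩ := exists_pow_lt_of_lt_one hε h
  have hmem : γ ^ n ∈ U := by
    apply hball
    simp only [Metric.mem_ball, dist_zero_right]
    rwa [norm_pow]
  have : (⟨γ ^ n, Γ.pow_mem hγ n⟩ : Γ) ∈ (Subtype.val ⁻¹' U : Set Γ) := hmem
  rw [hU0] at this
  have : γ ^ n = 0 := congrArg Subtype.val this
  exact h0 (pow_eq_zero_iff'.mp this).1

lemma gamma_unit (Γ : Subring ℂ) (hdisc : DiscreteTopology Γ) {v : ℂ}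
    (hv : v ∈ Γ) (h1 : ‖v‖ = 1) : ∃ w ∈ Γ, v * w = 1 := by
  have hv0 : v ≠ 0 := by
    intro h; rw [h] at h1; simp at h1
  have hxball : ∀ n : ℕ, v ^ n ∈ Metric.closedBall (0 : ℂ) 1 := by
    intro n
    simp [norm_pow, h1]
  obtain ⟨x, -, φ, hφ, hlim⟩ :=
    tendsto_subseq_of_bounded (Metric.isBounded_closedBall (x := (0:ℂ)) (r := 1)) hxball
  rw [Metric.tendsto_atTop] at hlim
  obtain ⟨K, hK⟩ := hlim (1/2) (by norm_num)
  have h1d : dist (v ^ φ K) x < 1/2 := hK K le_rfl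
  have h2d : dist (v ^ φ (K + 1)) x < 1/2 := hK (K+1) (Nat.le_succ K)
  have hdist : dist (v ^ φ K) (v ^ φ (K + 1)) < 1 := by
    calc dist (v ^ φ K) (v ^ φ (K + 1)) ≤ dist (v ^ φ K) x + dist (v ^ φ (K+1)) x :=
          dist_triangle_right _ _ _
      _ < 1 := by linarith
  have heq : v ^ φ K = v ^ φ (K + 1) := by
    by_contra hne
    have hmem : v ^ φ (K + 1) - v ^ φ K ∈ Γ := Γ.sub_mem (Γ.pow_mem hv _) (Γ.pow_mem hv _)
    have hne0 : v ^ φ (K + 1) - v ^ φ K ≠ 0 := sub_ne_zero.2 (Ne.symm hne)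
    have := gamma_one_le Γ hdisc hmem hne0
    rw [dist_eq_norm, ← neg_sub, norm_neg] at hdist
    linarith
  have hlt : φ K < φ (K + 1) := hφ (Nat.lt_succ_self K)
  obtain ⟨t, ht⟩ := Nat.exists_eq_add_of_lt hlt
  have hpow : v ^ φ K * v ^ (t + 1) = v ^ φ K * 1 := by
    rw [mul_one, ← pow_add, ← Nat.add_assoc, ← ht, heq]
  have hvt : v ^ (t + 1) = 1 := mul_left_cancel₀ (pow_ne_zero _ hv0) hpow
  exact ⟨v ^ t, Γ.pow_mem hv t, by rw [← pow_succ']; exact hvt⟩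

end Helpers

/-- Corollary 4.4: for an expansion with monotonic `|q_n|`, `inf |z_n| > 1` and
`limsup |δ_n| < ν(Γ)`, the number `z` is badly approximable with respect to the
Euclidean subring `Γ` iff the partial quotients are bounded. -/
theorem stmt_11 (Γ : Subring ℂ) (hdisc : DiscreteTopology Γ)
    (heucl : ∀ w : ℂ, ∃ γ ∈ Γ, ‖w - γ‖ < 1)
    (ν : ℝ) (hν : IsLeast {r : ℝ | ∃ γ ∈ Γ, 1 < ‖γ‖ ∧ ‖γ‖ = r} ν)
    (z : ℂ) (hz : z ∉ quotField Γ)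
    (a zs p q : ℕ → ℂ) (hcf : IsCFE Γ z a zs) (hpq : IsQPair a p q)
    (hmono : ∀ n : ℕ, 1 ≤ n → ‖q n‖ ≤ ‖q (n + 1)‖)
    (hinf : ∃ c : ℝ, 1 < c ∧ ∀ n, c ≤ ‖zs n‖)
    (hlimsup : ∃ β : ℝ, β < ν ∧
      ∀ᶠ n in Filter.atTop, ‖relErr z p q n‖ ≤ β) :
    BadlyApprox Γ z ↔ ∃ M : ℝ, ∀ n, ‖a n‖ ≤ M := by
  classical
  obtain ⟨haΓ, hz0, hza, hziter⟩ := hcf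
  obtain ⟨hp0, hp1, hpr, hq0, hq1, hqr⟩ := hpq
  obtain ⟨c, hc1, hcz⟩ := hinf
  obtain ⟨β, hβν, hβev⟩ := hlimsup
  obtain ⟨⟨γ₀, hγ₀Γ, hγ₀1, hγ₀ν⟩, hνmin⟩ := hν
  have hν1 : 1 < ν := hγ₀ν ▸ hγ₀1
  have hc0 : (0:ℝ) < c := lt_trans one_pos hc1
  -- basic facts about the iteration sequence
  have hzsne : ∀ n, zs n - a n ≠ 0 := by
    intro n h
    have := (hza n).1
    rw [h] at this; simp at this
  have hzsub : ∀ n, ‖zs n - a n‖ = (‖zs (n+1)‖)⁻¹ := by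
    intro n
    rw [hziter n, norm_inv, inv_inv]
  have hinvc : ∀ n, ‖zs n - a n‖ ≤ c⁻¹ := by
    intro n
    rw [hzsub n]
    exact inv_anti₀ hc0 (hcz (n+1))
  -- membership of p, q in Γ
  have hpqΓ : ∀ n, (p n ∈ Γ ∧ q n ∈ Γ) := by
    have H : ∀ n, (p n ∈ Γ ∧ q n ∈ Γ) ∧ (p (n+1) ∈ Γ ∧ q (n+1) ∈ Γ) := by
      intro n
      induction n with
      | zero =>
        refine ⟨⟨?_, ?_⟩, ?_, ?_⟩
        · rw [hp0]; exact Γ.one_mem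
        · rw [hq0]; exact Γ.zero_mem
        · rw [hp1]; exact haΓ 0
        · rw [hq1]; exact Γ.one_mem
      | succ n ih =>
        refine ⟨ih.2, ?_, ?_⟩
        · rw [hpr n]; exact Γ.add_mem (Γ.mul_mem (haΓ _) ih.2.1) ih.1.1
        · rw [hqr n]; exact Γ.add_mem (Γ.mul_mem (haΓ _) ih.2.2) ih.1.2
    exact fun n => (H n).1
  -- the error sequence
  set ee : ℕ → ℂ := fun n => q n * z - p n with hee
  have hee0 : ee 0 = -1 := by simp only [hee]; rw [hq0, hp0]; ring
  have heerec : ∀ n, ee (n+2) = a (n+1) * ee (n+1) + ee n := by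
    intro n; simp only [hee]; rw [hpr n, hqr n]; ring
  have heestep : ∀ n, ee (n+1) = -(zs n - a n) * ee n := by
    intro n
    induction n with
    | zero =>
      have h1 : ee 1 = z - a 0 := by simp only [hee]; rw [hq1, hp1]; ring
      rw [h1, hee0, hz0]; ring
    | succ n ih =>
      have hen : ee n = -(zs (n+1)) * ee (n+1) := by
        rw [ih, hziter n]
        linear_combination (-(ee n)) * inv_mul_cancel₀ (hzsne n)
      rw [heerec n, hen]; ring
  have heene : ∀ n, ee n ≠ 0 := by
    intro n
    induction n with
    | zero => rw [hee0]; exact neg_ne_zero.2 one_ne_zero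
    | succ n ih => rw [heestep n]; exact mul_ne_zero (neg_ne_zero.2 (hzsne n)) ih
  have heebound : ∀ n, ‖ee n‖ ≤ (c⁻¹)^n := by
    intro n
    induction n with
    | zero => rw [hee0]; simp
    | succ n ih =>
      rw [heestep n, norm_mul, norm_neg]
      calc ‖zs n - a n‖ * ‖ee n‖ ≤ c⁻¹ * (c⁻¹)^n :=
            mul_le_mul (hinvc n) ih (norm_nonneg _) (by positivity)
        _ = (c⁻¹)^(n+1) := by ring
  -- the D sequence
  set DD : ℕ → ℂ := fun n => q (n+1) * zs (n+1) + q n with hDD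
  have hDDprod : ∀ n, ee (n+1) * DD n = (-1)^n := by
    intro n
    induction n with
    | zero =>
      have h1 : ee 1 = zs 0 - a 0 := by simp only [hee]; rw [hq1, hp1, hz0]; ring
      have h2 : DD 0 = zs 1 := by simp only [hDD]; rw [hq1, hq0]; ring
      rw [h1, h2, hziter 0, mul_inv_cancel₀ (hzsne 0)]; simp
    | succ n ih =>
      have hDDstep : (zs (n+1) - a (n+1)) * DD (n+1) = DD n := by
        simp only [hDD]
        rw [hqr n, hziter (n+1)]
        linear_combination (a (n+1) * q (n+1) + q n) * mul_inv_cancel₀ (hzsne (n+1))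
      calc ee (n+2) * DD (n+1) = (-(zs (n+1) - a (n+1)) * ee (n+1)) * DD (n+1) := by
            rw [← heestep (n+1)]
        _ = -(ee (n+1) * ((zs (n+1) - a (n+1)) * DD (n+1))) := by ring
        _ = -(ee (n+1) * DD n) := by rw [hDDstep]
        _ = (-1)^(n+1) := by rw [ih]; ring
  have hDDne : ∀ n, DD n ≠ 0 := by
    intro n h
    have h2 := hDDprod n
    rw [h, mul_zero] at h2
    have h3 := congrArg (‖·‖) h2
    simp at h3
  have habsDD : ∀ n, ‖ee (n+1)‖ * ‖DD n‖ = 1 := by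
    intro n
    rw [← norm_mul, hDDprod n]
    simp
  -- determinant identity
  have hdet : ∀ n, p (n+1) * q n - p n * q (n+1) = (-1)^(n+1) := by
    intro n
    induction n with
    | zero => rw [hp1, hq0, hp0, hq1]; ring
    | succ n ih =>
      rw [hpr n, hqr n]
      linear_combination (-1 : ℂ) * ih
  -- facts about q
  have hq1abs : ∀ n, 1 ≤ ‖q (n+1)‖ := by
    intro n
    induction n with
    | zero => rw [hq1]; simp
    | succ n ih => exact le_trans ih (hmono (n+1) (Nat.le_add_left 1 n))
  have hqne : ∀ n, q (n+1) ≠ 0 := by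
    intro n h
    have := hq1abs n
    rw [h] at this; simp at this; linarith
  have hqmono : ∀ n, ‖q n‖ ≤ ‖q (n+1)‖ := by
    intro n
    cases n with
    | zero => rw [hq0, hq1]; simp
    | succ n => exact hmono (n+1) (Nat.le_add_left 1 n)
  have hrel : ∀ n, relErr z p q n = q (n+1) * ee (n+1) := by
    intro n; simp only [relErr, hee]
  have hrelne : ∀ n, relErr z p q n ≠ 0 := by
    intro n; rw [hrel n]; exact mul_ne_zero (hqne n) (heene (n+1))
  have hrelabs : ∀ n, ‖relErr z p q n‖ * ‖DD n‖
      = ‖q (n+1)‖ := by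
    intro n
    rw [hrel n, norm_mul, mul_assoc, habsDD n, mul_one]
  constructor
  · -- badly approximable implies bounded partial quotients
    rintro ⟨δ, hδ0, hδ⟩
    refine ⟨max (‖a 0‖) (1/δ + 2), fun n => ?_⟩
    cases n with
    | zero => exact le_max_left _ _
    | succ n =>
      refine le_trans ?_ (le_max_right _ _)
      have hQ1 := hq1abs n
      have hQpos : (0:ℝ) < ‖q (n+1)‖ := lt_of_lt_of_le one_pos hQ1
      have h1 := hδ (p (n+1)) (hpqΓ (n+1)).1 (q (n+1)) (hpqΓ (n+1)).2 (hqne n)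
      have hfrac : z - p (n+1) / q (n+1) = ee (n+1) / q (n+1) := by
        show z - p (n+1) / q (n+1) = (q (n+1) * z - p (n+1)) / q (n+1)
        rw [eq_div_iff (hqne n), sub_mul, div_mul_cancel₀ _ (hqne n)]; ring
      rw [hfrac, norm_div] at h1
      -- h1 : δ / |q|^2 ≤ |ee|/|q|
      have hδle : δ ≤ ‖q (n+1)‖ * ‖ee (n+1)‖ := by
        have h2 := mul_le_mul_of_nonneg_right h1 (sq_nonneg (‖q (n+1)‖))
        rw [div_mul_cancel₀ _ (by positivity)] at h2
        calc δ ≤ ‖ee (n+1)‖ / ‖q (n+1)‖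
              * ‖q (n+1)‖ ^ 2 := h2
          _ = ‖q (n+1)‖ * ‖ee (n+1)‖ := by
              field_simp
      -- so |DD n| ≤ |q (n+1)| / δ
      have hDDle : ‖DD n‖ ≤ ‖q (n+1)‖ / δ := by
        rw [le_div_iff₀ hδ0]
        calc ‖DD n‖ * δ
            ≤ ‖DD n‖ * (‖q (n+1)‖ * ‖ee (n+1)‖) :=
              mul_le_mul_of_nonneg_left hδle (norm_nonneg _)
          _ = (‖ee (n+1)‖ * ‖DD n‖) * ‖q (n+1)‖ := by ring
          _ = ‖q (n+1)‖ := by rw [habsDD n, one_mul]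
      -- bound |zs (n+1)|
      have hzsle : ‖zs (n+1)‖ ≤ 1/δ + 1 := by
        have hqz : q (n+1) * zs (n+1) = DD n - q n := by simp only [hDD]; ring
        have h3 : ‖q (n+1)‖ * ‖zs (n+1)‖
            ≤ ‖DD n‖ + ‖q n‖ := by
          rw [← norm_mul, hqz]; exact cabs_sub_le _ _
        have h4 : ‖q (n+1)‖ * ‖zs (n+1)‖
            ≤ ‖q (n+1)‖ / δ + ‖q (n+1)‖ :=
          le_trans h3 (add_le_add hDDle (hqmono n))
        have h5 : ‖q (n+1)‖ * ‖zs (n+1)‖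
            ≤ ‖q (n+1)‖ * (1/δ + 1) := by
          calc ‖q (n+1)‖ * ‖zs (n+1)‖
              ≤ ‖q (n+1)‖ / δ + ‖q (n+1)‖ := h4
            _ = ‖q (n+1)‖ * (1/δ + 1) := by field_simp
        exact le_of_mul_le_mul_left h5 hQpos
      have h6 : ‖a (n+1)‖
          ≤ ‖zs (n+1)‖ + ‖zs (n+1) - a (n+1)‖ := by
        calc ‖a (n+1)‖ = ‖zs (n+1) - (zs (n+1) - a (n+1))‖ := by
              congr 1; ring
          _ ≤ _ := cabs_sub_le _ _
      have h7 := (hza (n+1)).2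
      linarith
  · -- bounded partial quotients implies badly approximable
    rintro ⟨M, hM⟩
    have hMz : ∀ n, ‖zs n‖ ≤ M + 1 := by
      intro n
      have h1 : ‖zs n‖ ≤ ‖a n‖ + ‖zs n - a n‖ := by
        calc ‖zs n‖ = ‖a n + (zs n - a n)‖ := by congr 1; ring
          _ ≤ _ := norm_add_le _ _
      have h2 := (hza n).2
      have h3 := hM n
      linarith
    have hM0 : (0:ℝ) < M + 1 := lt_of_lt_of_le hc0 (le_trans (hcz 0) (hMz 0))
    have hM2 : (0:ℝ) < M + 2 := by linarith
    obtain ⟨N₀, hN₀⟩ := Filter.eventually_atTop.1 hβev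
    have hβ0 : 0 < β := lt_of_lt_of_le ((norm_pos_iff.2 (hrelne N₀))) (hN₀ N₀ le_rfl)
    set d : ℝ := (M + 2)⁻¹ with hd
    have hdpos : 0 < d := inv_pos.2 hM2
    have hdle : ∀ n, d ≤ ‖q (n+1)‖ * ‖ee (n+1)‖ := by
      intro n
      have hDb : ‖DD n‖ ≤ ‖q (n+1)‖ * (M + 2) := by
        have hDDdef : DD n = q (n+1) * zs (n+1) + q n := rfl
        have h1 : ‖DD n‖
            ≤ ‖q (n+1)‖ * ‖zs (n+1)‖ + ‖q n‖ := by
          rw [hDDdef, ← norm_mul]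
          exact norm_add_le _ _
        have h2 := hMz (n+1)
        have h3 := hqmono n
        have h4 := hq1abs n
        nlinarith [norm_nonneg (q (n+1)), norm_nonneg (q n),
          norm_nonneg (zs (n+1))]
      have hDD0 : 0 < ‖DD n‖ := (norm_pos_iff.2 (hDDne n))
      have h2 : ‖q (n+1)‖ * ‖ee (n+1)‖ * ‖DD n‖
          = ‖q (n+1)‖ := by rw [mul_assoc, habsDD n, mul_one]
      have h3 : d * ‖DD n‖ ≤ ‖q (n+1)‖ := by
        calc d * ‖DD n‖ ≤ d * (‖q (n+1)‖ * (M+2)) :=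
              mul_le_mul_of_nonneg_left hDb (le_of_lt hdpos)
          _ = ‖q (n+1)‖ * (d * (M+2)) := by ring
          _ = ‖q (n+1)‖ := by rw [hd, inv_mul_cancel₀ (ne_of_gt hM2), mul_one]
      have h4 : d * ‖DD n‖
          ≤ (‖q (n+1)‖ * ‖ee (n+1)‖) * ‖DD n‖ := by
        rw [h2]; exact h3
      exact le_of_mul_le_mul_right h4 hDD0
    set t₀ : ℝ := min ((M+1)⁻¹) (1 - c⁻¹) with ht₀def
    have hcinv : c⁻¹ < 1 := by
      rw [inv_lt_one_iff₀]; right; exact hc1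
    have ht₀ : 0 < t₀ := by
      rw [ht₀def]
      exact lt_min (inv_pos.2 hM0) (by linarith)
    have ht₀1 : t₀ ≤ (M+1)⁻¹ := by rw [ht₀def]; exact min_le_left _ _
    have ht₀2 : t₀ ≤ 1 - c⁻¹ := by rw [ht₀def]; exact min_le_right _ _
    have hνβ : 0 < ν/β - 1 := by
      have h1 : 1 < ν / β := (one_lt_div hβ0).2 hβν
      linarith
    set C : ℝ := min 1 (min t₀ (ν/β - 1)) / (M+1) with hCdef
    have hC0 : 0 < C := by
      rw [hCdef]
      exact div_pos (lt_min one_pos (lt_min ht₀ hνβ)) hM0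
    have hCle : C ≤ (M+1)⁻¹ := by
      rw [hCdef, div_eq_mul_inv]
      calc min 1 (min t₀ (ν/β - 1)) * (M+1)⁻¹ ≤ 1 * (M+1)⁻¹ :=
            mul_le_mul_of_nonneg_right (min_le_left _ _) (inv_nonneg.2 hM0.le)
        _ = (M+1)⁻¹ := one_mul _
    have hCle2 : C ≤ min t₀ (ν/β - 1) * (M+1)⁻¹ := by
      rw [hCdef, div_eq_mul_inv]
      exact mul_le_mul_of_nonneg_right (min_le_right _ _) (inv_nonneg.2 hM0.le)
    have hzsM : ∀ m, (M+1)⁻¹ ≤ ‖zs m - a m‖ := by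
      intro m
      rw [hzsub m]
      exact inv_anti₀ (lt_of_lt_of_le hc0 (hcz (m+1))) (hMz (m+1))
    -- key approximation lemma
    have key : ∀ n, N₀ ≤ n + 1 → ∀ P, P ∈ Γ → ∀ Q, Q ∈ Γ → Q ≠ 0 →
        ‖Q‖ ≤ ‖q (n+2)‖ →
        C * ‖ee (n+1)‖ ≤ ‖Q * z - P‖ := by
      intro n hn P hP Q hQ hQ0 hQle
      have hsΓ : ((-1:ℂ))^n ∈ Γ := Γ.pow_mem (Γ.neg_mem Γ.one_mem) n
      set u : ℂ := (-1)^n * (P * q (n+1) - Q * p (n+1)) with hu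
      set v : ℂ := (-1)^n * (Q * p (n+2) - P * q (n+2)) with hv
      have huΓ : u ∈ Γ := Γ.mul_mem hsΓ
        (Γ.sub_mem (Γ.mul_mem hP (hpqΓ (n+1)).2) (Γ.mul_mem hQ (hpqΓ (n+1)).1))
      have hvΓ : v ∈ Γ := Γ.mul_mem hsΓ
        (Γ.sub_mem (Γ.mul_mem hQ (hpqΓ (n+2)).1) (Γ.mul_mem hP (hpqΓ (n+2)).2))
      have hs2 : ((-1:ℂ))^n * ((-1:ℂ))^n = 1 := by
        rw [← pow_add]
        exact Even.neg_one_pow ⟨n, rfl⟩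
      have hQdec : Q = u * q (n+2) + v * q (n+1) := by
        rw [hu, hv]
        linear_combination (-((-1:ℂ)^n) * Q) * hdet (n+1) + (-Q) * hs2
      have hPdec : P = u * p (n+2) + v * p (n+1) := by
        rw [hu, hv]
        linear_combination (-((-1:ℂ)^n) * P) * hdet (n+1) + (-P) * hs2
      have hQzP : Q * z - P = u * ee (n+2) + v * ee (n+1) := by
        have e2 : ee (n+2) = q (n+2) * z - p (n+2) := rfl
        have e1 : ee (n+1) = q (n+1) * z - p (n+1) := rfl
        rw [e2, e1, hQdec, hPdec]
        ring
      by_cases hv0 : v = 0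
      · have hu0 : u ≠ 0 := by
          intro h
          apply hQ0
          rw [hQdec, h, hv0]; ring
        have h1le : 1 ≤ ‖u‖ := gamma_one_le Γ hdisc huΓ hu0
        have habs : ‖Q * z - P‖ = ‖u‖ * ‖ee (n+2)‖ := by
          rw [hQzP, hv0, zero_mul, add_zero, norm_mul]
        rw [habs]
        have hee2 : ‖ee (n+2)‖
            = ‖zs (n+1) - a (n+1)‖ * ‖ee (n+1)‖ := by
          rw [heestep (n+1), norm_mul, norm_neg]
        calc C * ‖ee (n+1)‖ ≤ (M+1)⁻¹ * ‖ee (n+1)‖ :=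
              mul_le_mul_of_nonneg_right hCle (norm_nonneg _)
          _ ≤ ‖zs (n+1) - a (n+1)‖ * ‖ee (n+1)‖ :=
              mul_le_mul_of_nonneg_right (hzsM (n+1)) (norm_nonneg _)
          _ = ‖ee (n+2)‖ := hee2.symm
          _ ≤ ‖u‖ * ‖ee (n+2)‖ :=
              le_mul_of_one_le_left (norm_nonneg _) h1le
      · have hv1 : 1 ≤ ‖v‖ := gamma_one_le Γ hdisc hvΓ hv0
        have hfac : Q * z - P = ee (n+1) * (v - u * (zs (n+1) - a (n+1))) := by
          rw [hQzP, heestep (n+1)]; ring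
        have hw : (zs (n+1) - a (n+1)) * zs (n+2) = 1 := by
          rw [hziter (n+1)]
          exact mul_inv_cancel₀ (hzsne (n+1))
        have hfac2 : v - u * (zs (n+1) - a (n+1))
            = (v * zs (n+2) - u) * (zs (n+1) - a (n+1)) := by
          linear_combination (-v) * hw
        have hlow : min t₀ (ν/β - 1) ≤ ‖v * zs (n+2) - u‖ := by
          by_cases hvv : 1 < ‖v‖
          · refine le_trans (min_le_right _ _) ?_
            have hνv : ν ≤ ‖v‖ := hνmin ⟨v, hvΓ, hvv, rfl⟩
            have hq2ne := hqne (n+1)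
            have hq2pos : (0:ℝ) < ‖q (n+2)‖ :=
              lt_of_lt_of_le one_pos (hq1abs (n+1))
            have hid : v * zs (n+2) - u = (v * DD (n+1) - Q) / q (n+2) := by
              rw [eq_div_iff hq2ne]
              have hDDdef : DD (n+1) = q (n+2) * zs (n+2) + q (n+1) := rfl
              rw [hDDdef, hQdec]
              ring
            have hδn1 : ‖relErr z p q (n+1)‖ ≤ β := hN₀ (n+1) hn
            have hrpos : 0 < ‖relErr z p q (n+1)‖ :=
              (norm_pos_iff.2 (hrelne (n+1)))
            have hDDval : ‖DD (n+1)‖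
                = ‖q (n+2)‖ / ‖relErr z p q (n+1)‖ := by
              rw [eq_div_iff (ne_of_gt hrpos), mul_comm]
              exact hrelabs (n+1)
            have hDDge : ‖q (n+2)‖ / β ≤ ‖DD (n+1)‖ := by
              rw [hDDval]
              exact div_le_div_of_nonneg_left (norm_nonneg _) hrpos hδn1
            have hnum : (ν/β - 1) * ‖q (n+2)‖
                ≤ ‖v * DD (n+1) - Q‖ := by
              have h1 : ‖v * DD (n+1)‖ - ‖Q‖
                  ≤ ‖v * DD (n+1) - Q‖ := cabs_sub_cabs _ _
              rw [norm_mul] at h1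
              have h2 : ν * (‖q (n+2)‖ / β)
                  ≤ ‖v‖ * ‖DD (n+1)‖ :=
                mul_le_mul hνv hDDge (by positivity) (norm_nonneg _)
              have h3 : (ν/β - 1) * ‖q (n+2)‖
                  = ν * (‖q (n+2)‖/β) - ‖q (n+2)‖ := by
                field_simp
              linarith [hQle]
            rw [hid, norm_div, le_div_iff₀ hq2pos]
            exact hnum
          · refine le_trans (min_le_left _ _) ?_
            have hv1' : ‖v‖ = 1 := le_antisymm (not_lt.1 hvv) hv1
            obtain ⟨w', hw'Γ, hvw'⟩ := gamma_unit Γ hdisc hvΓ hv1'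
            have hγΓ : u * w' ∈ Γ := Γ.mul_mem huΓ hw'Γ
            have hvγ : v * (u * w') = u := by
              calc v * (u * w') = u * (v * w') := by ring
                _ = u := by rw [hvw', mul_one]
            have habsvz : ‖v * zs (n+2) - u‖
                = ‖zs (n+2) - u * w'‖ := by
              conv_lhs => rw [← hvγ]
              rw [← mul_sub, norm_mul, hv1', one_mul]
            rw [habsvz]
            by_cases hγa : u * w' = a (n+2)
            · rw [hγa]
              exact le_trans ht₀1 (hzsM (n+2))
            · have hd0 : a (n+2) - u * w' ∈ Γ := Γ.sub_mem (haΓ (n+2)) hγΓ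
              have hdne : a (n+2) - u * w' ≠ 0 := sub_ne_zero.2 (Ne.symm hγa)
              have h1 : 1 ≤ ‖a (n+2) - u * w'‖ := gamma_one_le Γ hdisc hd0 hdne
              have htri : ‖a (n+2) - u * w'‖
                  ≤ ‖a (n+2) - zs (n+2)‖ + ‖zs (n+2) - u * w'‖ := by
                calc ‖a (n+2) - u*w'‖
                    = ‖(a (n+2) - zs (n+2)) + (zs (n+2) - u*w')‖ := by
                      congr 1; ring
                  _ ≤ _ := norm_add_le _ _
              have hza2 : ‖a (n+2) - zs (n+2)‖ ≤ c⁻¹ := by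
                have heqn : a (n+2) - zs (n+2) = -(zs (n+2) - a (n+2)) := by ring
                rw [heqn, norm_neg]
                exact hinvc (n+2)
              linarith
        have habs2 : ‖Q*z - P‖ = ‖ee (n+1)‖ *
            (‖v * zs (n+2) - u‖ * ‖zs (n+1) - a (n+1)‖) := by
          rw [hfac, hfac2, norm_mul, norm_mul]
        rw [habs2]
        calc C * ‖ee (n+1)‖
            ≤ (min t₀ (ν/β-1) * (M+1)⁻¹) * ‖ee (n+1)‖ :=
              mul_le_mul_of_nonneg_right hCle2 (norm_nonneg _)
          _ ≤ (‖v * zs (n+2) - u‖ * ‖zs (n+1) - a (n+1)‖)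
              * ‖ee (n+1)‖ := by
              apply mul_le_mul_of_nonneg_right _ (norm_nonneg _)
              exact mul_le_mul hlow (hzsM (n+1)) (inv_nonneg.2 hM0.le) (norm_nonneg _)
          _ = ‖ee (n+1)‖ * (‖v * zs (n+2) - u‖
              * ‖zs (n+1) - a (n+1)‖) := by ring
    -- assembly
    have heeN : 0 < ‖ee (N₀+1)‖ := (norm_pos_iff.2 (heene (N₀+1)))
    refine ⟨min (C * ‖ee (N₀+1)‖) (C * d),
      lt_min (mul_pos hC0 heeN) (mul_pos hC0 hdpos), ?_⟩
    intro P hP Q hQ hQ0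
    have hQ1 : 1 ≤ ‖Q‖ := gamma_one_le Γ hdisc hQ hQ0
    have hQpos : (0:ℝ) < ‖Q‖ := lt_of_lt_of_le one_pos hQ1
    have hgrow : ∀ m : ℕ, d * c^(m+2) ≤ ‖q (m+2)‖ := by
      intro m
      have h1 : ‖ee (m+2)‖ ≤ (c⁻¹)^(m+2) := heebound (m+2)
      have h2 : d ≤ ‖q (m+2)‖ * ‖ee (m+2)‖ := hdle (m+1)
      have h3 : ‖ee (m+2)‖ * c^(m+2) ≤ 1 := by
        calc ‖ee (m+2)‖ * c^(m+2) ≤ (c⁻¹)^(m+2) * c^(m+2) :=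
              mul_le_mul_of_nonneg_right h1 (by positivity)
          _ = 1 := by rw [← mul_pow, inv_mul_cancel₀ (ne_of_gt hc0), one_pow]
      calc d * c^(m+2)
          ≤ (‖q (m+2)‖ * ‖ee (m+2)‖) * c^(m+2) :=
            mul_le_mul_of_nonneg_right h2 (by positivity)
        _ = ‖q (m+2)‖ * (‖ee (m+2)‖ * c^(m+2)) := by ring
        _ ≤ ‖q (m+2)‖ * 1 := mul_le_mul_of_nonneg_left h3 (norm_nonneg _)
        _ = ‖q (m+2)‖ := mul_one _
    obtain ⟨n₁, hn₁⟩ := pow_unbounded_of_one_lt (‖Q‖ / d) hc1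
    have hex : ∃ m, N₀ ≤ m ∧ ‖Q‖ ≤ ‖q (m+2)‖ := by
      refine ⟨max N₀ n₁, le_max_left _ _, ?_⟩
      have hcmono : c ^ n₁ ≤ c ^ (max N₀ n₁ + 2) :=
        pow_le_pow_right₀ (le_of_lt hc1) (le_trans (le_max_right N₀ n₁) (Nat.le_add_right _ 2))
      have h5 : ‖Q‖ < d * c ^ n₁ := by
        have h6 := (div_lt_iff₀ hdpos).1 hn₁
        linarith
      have h4 : ‖Q‖ ≤ d * c ^ (max N₀ n₁ + 2) := by
        calc ‖Q‖ ≤ d * c ^ n₁ := le_of_lt h5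
          _ ≤ d * c ^ (max N₀ n₁ + 2) := mul_le_mul_of_nonneg_left hcmono (le_of_lt hdpos)
      exact le_trans h4 (hgrow (max N₀ n₁))
    have hexmin : ∃ m, (N₀ ≤ m ∧ ‖Q‖ ≤ ‖q (m+2)‖) ∧
        ∀ k, k < m → ¬(N₀ ≤ k ∧ ‖Q‖ ≤ ‖q (k+2)‖) :=
      ⟨Nat.find hex, Nat.find_spec hex, fun k hk => Nat.find_min hex hk⟩
    obtain ⟨n, ⟨hnN, hnQ⟩, hnmin⟩ := hexmin
    have hkey := key n (le_trans hnN (Nat.le_succ n)) P hP Q hQ hQ0 hnQ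
    have hzPQ : ‖z - P/Q‖ = ‖Q*z - P‖ / ‖Q‖ := by
      rw [eq_div_iff (ne_of_gt hQpos), ← norm_mul]
      congr 1
      rw [sub_mul, div_mul_cancel₀ _ hQ0]
      ring
    rw [hzPQ]
    rcases eq_or_lt_of_le hnN with heq | hlt
    · have h6 : min (C * ‖ee (N₀+1)‖) (C * d) ≤ C * ‖ee (n+1)‖ := by
        rw [← heq]
        exact min_le_left _ _
      have hQsq : ‖Q‖ ≤ ‖Q‖ ^ 2 := by nlinarith
      have step1 : min (C * ‖ee (N₀+1)‖) (C * d) / ‖Q‖ ^ 2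
          ≤ (C * ‖ee (n+1)‖) / ‖Q‖ :=
        div_le_div₀ (le_of_lt (mul_pos hC0 ((norm_pos_iff.2 (heene (n+1)))))) h6 hQpos hQsq
      exact le_trans step1 ((div_le_div_iff_of_pos_right hQpos).2 hkey)
    · have hpos : 0 < n := lt_of_le_of_lt (Nat.zero_le N₀) hlt
      have hmin := hnmin (n-1) (by omega)
      have hn12 : n - 1 + 2 = n + 1 := by omega
      rw [hn12] at hmin
      have hqlt : ‖q (n+1)‖ < ‖Q‖ := by
        by_contra hcon
        push_neg at hcon
        exact hmin ⟨by omega, hcon⟩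
      have h8 : d / ‖Q‖ ≤ ‖ee (n+1)‖ := by
        rw [div_le_iff₀ hQpos]
        calc d ≤ ‖q (n+1)‖ * ‖ee (n+1)‖ := hdle n
          _ ≤ ‖Q‖ * ‖ee (n+1)‖ :=
            mul_le_mul_of_nonneg_right (le_of_lt hqlt) (norm_nonneg _)
          _ = ‖ee (n+1)‖ * ‖Q‖ := mul_comm _ _
      have step1 : min (C * ‖ee (N₀+1)‖) (C * d) / ‖Q‖ ^ 2
          ≤ (C * (d / ‖Q‖)) / ‖Q‖ := by
        have h9 : min (C * ‖ee (N₀+1)‖) (C * d) ≤ C * d := min_le_right _ _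
        have h10 : (C*d)/‖Q‖^2 = (C * (d/‖Q‖))/‖Q‖ := by
          field_simp
        rw [← h10]
        exact (div_le_div_iff_of_pos_right (pow_pos hQpos 2)).2 h9
      have step2 : (C * (d / ‖Q‖)) / ‖Q‖
          ≤ ‖Q*z - P‖ / ‖Q‖ := by
        apply (div_le_div_iff_of_pos_right hQpos).2
        calc C * (d/‖Q‖) ≤ C * ‖ee (n+1)‖ :=
              mul_le_mul_of_nonneg_left h8 (le_of_lt hC0)
          _ ≤ ‖Q*z - P‖ := hkey
      exact le_trans step1 step2
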